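/- With M as above (M'(t) = -ν^{1/3} M(t)/(ν^{2/3}(t-η/k)² + 1), M(0)=1, k ≠ 0), there is an absolute constant C such that for all t ≥ 0: 1 ≤ C ν^{-1/6} (√(-M'(t)M(t)) + ν^{1/2} |(k, η - kt)|). -/

import Mathlib

open Real

/-- The pointwise coercivity of the ghost multiplier: there is an absolute constant
`C` such that for every `ν > 0`, `k ≠ 0`, `η ∈ ℝ`, if `M` solves
`M'(t) = -ν^{1/3} M(t)/(ν^{2/3}(t - η/k)² + 1)`, `M(0) = 1`, then for all `t ≥ 0`,
`1 ≤ C ν^{-1/6} (√(-M'(t) M(t)) + ν^{1/2} |(k, η - kt)|)`. -/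
theorem stmt_12 :
    ∃ C > (0:ℝ), ∀ ν : ℝ, 0 < ν → ∀ k : ℤ, k ≠ 0 → ∀ η : ℝ,
      ∀ M M' : ℝ → ℝ, M 0 = 1 →
      (∀ t, HasDerivAt M (M' t) t) →
      (∀ t, M' t = -(ν ^ ((1:ℝ)/3) / (ν ^ ((2:ℝ)/3) * (t - η/k)^2 + 1)) * M t) →
      ∀ t ≥ (0:ℝ),
        1 ≤ C * ν ^ (-(1:ℝ)/6) *
          (Real.sqrt (-(M' t) * M t)
            + ν ^ ((1:ℝ)/2) * Real.sqrt ((k:ℝ)^2 + (η - k*t)^2)) := by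
  refine ⟨Real.sqrt 2 * Real.exp π, by positivity, ?_⟩
  intro ν hν k hk η M M' hM0 hMd hM'
  set r : ℝ := ν ^ ((1:ℝ)/3) with hr
  have hrpos : 0 < r := Real.rpow_pos_of_pos hν _
  have hr2 : ν ^ ((2:ℝ)/3) = r^2 := by
    rw [hr, ← Real.rpow_natCast (ν ^ ((1:ℝ)/3)) 2, ← Real.rpow_mul hν.le]
    norm_num
  set c : ℝ := η / k with hc
  set g : ℝ → ℝ := fun s => Real.arctan (r * (s - c)) with hg
  have hgd : ∀ s : ℝ, HasDerivAt g (ν ^ ((1:ℝ)/3) / (ν ^ ((2:ℝ)/3) * (s - c)^2 + 1)) s := by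
    intro s
    have h1 : HasDerivAt (fun s : ℝ => r * (s - c)) r s := by
      simpa using ((hasDerivAt_id s).sub_const c).const_mul r
    have h2 := (Real.hasDerivAt_arctan (r * (s - c))).comp s h1
    refine h2.congr_deriv ?_
    rw [hr2, ← hr, one_div, inv_mul_eq_div]
    congr 1
    ring
  have hH : ∀ t : ℝ, M t * Real.exp (g t) = Real.exp (g 0) := by
    have hd : ∀ t : ℝ, HasDerivAt (fun t => M t * Real.exp (g t)) 0 t := by
      intro t
      have h2 := (hgd t).exp
      have h3 := (hMd t).mul h2
      refine h3.congr_deriv ?_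
      rw [hM' t, ← hr]
      ring
    intro t
    have hco := is_const_of_deriv_eq_zero (f := fun t => M t * Real.exp (g t))
      (fun x => (hd x).differentiableAt) (fun x => (hd x).deriv) t 0
    simpa [hM0] using hco
  have hMeq : ∀ t : ℝ, M t = Real.exp (g 0 - g t) := by
    intro t
    have h := hH t
    rw [Real.exp_sub]
    field_simp
    linarith [h]
  have hMlb : ∀ t : ℝ, Real.exp (-π) ≤ M t := by
    intro t
    rw [hMeq t]
    apply Real.exp_le_exp.2
    have h1 := Real.arctan_lt_pi_div_two (r * (t - c))
    have h2 := Real.neg_pi_div_two_lt_arctan (r * (0 - c))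
    simp only [hg]
    linarith
  intro t ht
  by_cases hcase : r * |t - c| ≤ 1
  · -- enhanced dissipation regime
    have hsq : (r * (t - c))^2 ≤ 1 := by
      have : |r * (t - c)| ≤ 1 := by
        rw [abs_mul, abs_of_pos hrpos]; exact hcase
      nlinarith [abs_nonneg (r * (t-c)), sq_abs (r * (t-c))]
    have ha : r / 2 ≤ ν ^ ((1:ℝ)/3) / (ν ^ ((2:ℝ)/3) * (t - c)^2 + 1) := by
      rw [hr2, ← hr]
      have hd1 : r^2 * (t-c)^2 + 1 ≤ 2 := by nlinarith
      have hd0 : 0 < r^2 * (t-c)^2 + 1 := by positivity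
      rw [div_le_div_iff₀ (by norm_num) hd0]
      nlinarith
    have hprod : r / 2 * Real.exp (-π)^2 ≤ -(M' t) * M t := by
      rw [hM' t]
      have hM2 : Real.exp (-π)^2 ≤ (M t)^2 := by
        nlinarith [hMlb t, Real.exp_pos (-π)]
      have : -(-(ν ^ ((1:ℝ)/3) / (ν ^ ((2:ℝ)/3) * (t - c)^2 + 1)) * M t) * M t
          = (ν ^ ((1:ℝ)/3) / (ν ^ ((2:ℝ)/3) * (t - c)^2 + 1)) * (M t)^2 := by ring
      rw [this]
      have hapos : (0:ℝ) < ν ^ ((1:ℝ)/3) / (ν ^ ((2:ℝ)/3) * (t - c)^2 + 1) := by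
        rw [hr2]; positivity
      nlinarith [Real.exp_pos (-π)]
    set L : ℝ := ν ^ ((1:ℝ)/6) * Real.exp (-π) / Real.sqrt 2 with hL
    have hLsq : L^2 = r / 2 * Real.exp (-π)^2 := by
      rw [hL, div_pow, mul_pow, Real.sq_sqrt (by norm_num : (0:ℝ) ≤ 2)]
      have h6 : (ν ^ ((1:ℝ)/6))^2 = r := by
        rw [hr, ← Real.rpow_natCast (ν ^ ((1:ℝ)/6)) 2, ← Real.rpow_mul hν.le]
        norm_num
      rw [h6]; ring
    have hLle : L ≤ Real.sqrt (-(M' t) * M t) := by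
      apply Real.le_sqrt' (by positivity) |>.2 ?_
      rw [hLsq]; exact hprod
    have hkey : Real.sqrt 2 * Real.exp π * ν ^ (-(1:ℝ)/6) * L = 1 := by
      rw [hL]
      have h1 : ν ^ (-(1:ℝ)/6) * ν ^ ((1:ℝ)/6) = 1 := by
        rw [← Real.rpow_add hν]; norm_num
      have h2 : Real.exp π * Real.exp (-π) = 1 := by
        rw [← Real.exp_add]; simp
      have h3 : Real.sqrt 2 ≠ 0 := by positivity
      have h4 : Real.sqrt 2 * Real.exp π * ν ^ (-(1:ℝ)/6) *
          (ν ^ ((1:ℝ)/6) * Real.exp (-π) / Real.sqrt 2)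
          = (Real.sqrt 2 / Real.sqrt 2) * (Real.exp π * Real.exp (-π)) *
            (ν ^ (-(1:ℝ)/6) * ν ^ ((1:ℝ)/6)) := by ring
      rw [h4, h1, h2, div_self h3]
      ring
    have hpos : 0 < Real.sqrt 2 * Real.exp π * ν ^ (-(1:ℝ)/6) := by positivity
    have hterm2 : 0 ≤ ν ^ ((1:ℝ)/2) * Real.sqrt ((k:ℝ)^2 + (η - k*t)^2) := by positivity
    calc (1:ℝ) = Real.sqrt 2 * Real.exp π * ν ^ (-(1:ℝ)/6) * L := hkey.symm
      _ ≤ Real.sqrt 2 * Real.exp π * ν ^ (-(1:ℝ)/6) *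
          (Real.sqrt (-(M' t) * M t) + ν ^ ((1:ℝ)/2) * Real.sqrt ((k:ℝ)^2 + (η - k*t)^2)) := by
        apply mul_le_mul_of_nonneg_left _ hpos.le
        linarith
  · push_neg at hcase
    have hk1 : (1:ℝ) ≤ |(k:ℝ)| := by
      have := Int.one_le_abs hk
      exact_mod_cast (by exact_mod_cast this : (1:ℝ) ≤ |(k:ℤ)|)
    have hkne : ((k:ℝ)) ≠ 0 := Int.cast_ne_zero.2 hk
    have heta : η - (k:ℝ)*t = (k:ℝ) * (c - t) := by
      rw [hc]; field_simp
    have habs : 1 / r ≤ |η - (k:ℝ)*t| := by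
      rw [heta, abs_mul]
      have h1 : 1 / r < |t - c| := by
        rw [div_lt_iff₀ hrpos] at *
        nlinarith [abs_nonneg (t - c)]
      have h2 : |c - t| = |t - c| := abs_sub_comm c t
      rw [h2]
      nlinarith [abs_nonneg (t - c), abs_nonneg ((k:ℝ))]
    have hsqrt : |η - (k:ℝ)*t| ≤ Real.sqrt ((k:ℝ)^2 + (η - k*t)^2) := by
      rw [← Real.sqrt_sq_eq_abs]
      apply Real.sqrt_le_sqrt
      nlinarith [sq_nonneg ((k:ℝ))]
    have h16 : ν ^ ((1:ℝ)/6) ≤ ν ^ ((1:ℝ)/2) * Real.sqrt ((k:ℝ)^2 + (η - k*t)^2) := by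
      have h1 : ν ^ ((1:ℝ)/6) = ν ^ ((1:ℝ)/2) * (1 / r) := by
        have ha3 : (1:ℝ) / ν ^ ((1:ℝ)/3) = ν ^ (-((1:ℝ)/3)) := by
          rw [Real.rpow_neg hν.le]; exact one_div _
        rw [hr, ha3, ← Real.rpow_add hν]
        norm_num
      rw [h1]
      apply mul_le_mul_of_nonneg_left (le_trans habs hsqrt) (by positivity)
    have hC1 : (1:ℝ) ≤ Real.sqrt 2 * Real.exp π := by
      nlinarith [Real.one_le_exp Real.pi_nonneg, Real.sqrt_le_sqrt (by norm_num : (1:ℝ) ≤ 2),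
        Real.sqrt_one, Real.sqrt_nonneg 2, Real.exp_pos π]
    have h1 : ν ^ (-(1:ℝ)/6) * ν ^ ((1:ℝ)/6) = 1 := by
      rw [← Real.rpow_add hν]; norm_num
    have hs0 : 0 ≤ Real.sqrt (-(M' t) * M t) := Real.sqrt_nonneg _
    have hn6 : 0 < ν ^ (-(1:ℝ)/6) := Real.rpow_pos_of_pos hν _
    have hsum : ν ^ ((1:ℝ)/6) ≤ Real.sqrt (-(M' t) * M t)
        + ν ^ ((1:ℝ)/2) * Real.sqrt ((k:ℝ)^2 + (η - k*t)^2) := by linarith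
    have hmain : (1:ℝ) ≤ ν ^ (-(1:ℝ)/6) *
        (Real.sqrt (-(M' t) * M t) + ν ^ ((1:ℝ)/2) * Real.sqrt ((k:ℝ)^2 + (η - k*t)^2)) := by
      calc (1:ℝ) = ν ^ (-(1:ℝ)/6) * ν ^ ((1:ℝ)/6) := h1.symm
        _ ≤ _ := mul_le_mul_of_nonneg_left hsum hn6.le
    have hpos2 : (0:ℝ) ≤ ν ^ (-(1:ℝ)/6) *
        (Real.sqrt (-(M' t) * M t) + ν ^ ((1:ℝ)/2) * Real.sqrt ((k:ℝ)^2 + (η - k*t)^2)) :=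
      le_trans zero_le_one hmain
    calc (1:ℝ) ≤ ν ^ (-(1:ℝ)/6) *
        (Real.sqrt (-(M' t) * M t) + ν ^ ((1:ℝ)/2) * Real.sqrt ((k:ℝ)^2 + (η - k*t)^2)) := hmain
      _ ≤ (Real.sqrt 2 * Real.exp π) * (ν ^ (-(1:ℝ)/6) *
          (Real.sqrt (-(M' t) * M t) + ν ^ ((1:ℝ)/2) * Real.sqrt ((k:ℝ)^2 + (η - k*t)^2))) :=
        le_mul_of_one_le_left hpos2 hC1
      _ = Real.sqrt 2 * Real.exp π * ν ^ (-(1:ℝ)/6) *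
          (Real.sqrt (-(M' t) * M t) + ν ^ ((1:ℝ)/2) * Real.sqrt ((k:ℝ)^2 + (η - k*t)^2)) := by
        ring
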